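/- Let A ∈ ℝ^{m×n} be any matrix, let G = (G_1,…,G_n) be a vector of i.i.d. standard Gaussian random variables, and let B = (B_1,…,B_n) be a vector of i.i.d. Rademacher random variables. Let X = AG and Y = AB, so X_t and Y_t (t ∈ [m]) are the coordinates of these random vectors. Then E[ sup_{t∈[m]} Y_t ] ≤ √(π/2) · E[ sup_{t∈[m]} X_t ]. -/

import Mathlib

open MeasureTheory ProbabilityTheory
open scoped ENNReal

/-- The law of a Rademacher random variable: uniform on `{-1, +1}`. -/
noncomputable def radMeasure : Measure ℝ :=
  (2⁻¹ : ℝ≥0∞) • Measure.dirac (1 : ℝ) + (2⁻¹ : ℝ≥0∞) • Measure.dirac (-1 : ℝ)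

section Helpers
open Real Set Filter
open scoped Topology

instance : IsProbabilityMeasure radMeasure := by
  constructor
  simp [radMeasure]
  rw [ENNReal.inv_two_add_inv_two]

lemma radMeasure_lintegral (g : ℝ → ℝ≥0∞) :
    ∫⁻ x, g x ∂radMeasure = 2⁻¹ * g 1 + 2⁻¹ * g (-1) := by
  simp [radMeasure, lintegral_add_measure, lintegral_smul_measure, lintegral_dirac]

lemma integrable_abs_rad : Integrable (fun x : ℝ => |x|) radMeasure := by
  refine ⟨measurable_abs.aestronglyMeasurable, ?_⟩
  simp only [HasFiniteIntegral]
  rw [radMeasure_lintegral (fun x => ‖|x|‖ₑ)]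
  simp

lemma gauss_map_neg :
    Measure.map (fun x : ℝ => -x) (gaussianReal 0 1) = gaussianReal 0 1 := by
  have h := gaussianReal_map_const_mul (μ := 0) (v := 1) (-1)
  have h2 : (fun x : ℝ => -x) = (((-1 : ℝ)) * ·) := by funext x; ring
  rw [h2, h]
  norm_num

lemma gauss_null_singleton (x : ℝ) : gaussianReal 0 1 {x} = 0 :=
  gaussianReal_absolutelyContinuous 0 one_ne_zero Real.volume_singleton

lemma gauss_abs_mem (s : Set ℝ) (hs : MeasurableSet s) :
    gaussianReal 0 1 {x | |x| ∈ s} = 2 * gaussianReal 0 1 (s ∩ Ioi 0) := by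
  set γ := gaussianReal 0 1
  have hsplit : γ {x | |x| ∈ s} =
      γ ({x | |x| ∈ s} ∩ Iio 0) + γ ({x | |x| ∈ s} ∩ Ici 0) := by
    rw [← measure_inter_add_diff {x | |x| ∈ s} measurableSet_Iio]
    congr 1
    simp [Set.diff_eq, Set.compl_Iio]
  have hA : {x : ℝ | |x| ∈ s} ∩ Ici 0 = s ∩ Ici 0 := by
    ext x
    simp only [Set.mem_inter_iff, Set.mem_setOf_eq, Set.mem_Ici]
    constructor
    · rintro ⟨h1, h2⟩; rw [abs_of_nonneg h2] at h1; exact ⟨h1, h2⟩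
    · rintro ⟨h1, h2⟩; rw [abs_of_nonneg h2]; exact ⟨h1, h2⟩
  have hB : {x : ℝ | |x| ∈ s} ∩ Iio 0 = (fun x : ℝ => -x) ⁻¹' (s ∩ Ioi 0) := by
    ext x
    simp only [Set.mem_inter_iff, Set.mem_setOf_eq, Set.mem_Iio, Set.mem_preimage, Set.mem_Ioi]
    constructor
    · rintro ⟨h1, h2⟩; rw [abs_of_neg h2] at h1; exact ⟨h1, by linarith⟩
    · rintro ⟨h1, h2⟩
      have hx : x < 0 := by linarith
      rw [abs_of_neg hx]; exact ⟨h1, hx⟩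
  have hBval : γ ({x | |x| ∈ s} ∩ Iio 0) = γ (s ∩ Ioi 0) := by
    rw [hB, ← Measure.map_apply measurable_neg (hs.inter measurableSet_Ioi), gauss_map_neg]
  have hIci : γ (s ∩ Ici 0) = γ (s ∩ Ioi 0) := by
    have h0 : s ∩ Ici 0 = (s ∩ Ioi 0) ∪ (s ∩ {0}) := by
      ext x
      simp only [Set.mem_inter_iff, Set.mem_Ici, Set.mem_Ioi, Set.mem_union,
        Set.mem_singleton_iff]
      constructor
      · rintro ⟨h1, h2⟩
        rcases lt_or_eq_of_le h2 with h | h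
        · exact Or.inl ⟨h1, h⟩
        · exact Or.inr ⟨h1, h.symm⟩
      · rintro (⟨h1, h2⟩ | ⟨h1, h2⟩)
        · exact ⟨h1, le_of_lt h2⟩
        · exact ⟨h1, le_of_eq h2.symm⟩
    rw [h0]
    refine le_antisymm ((measure_union_le _ _).trans ?_) (measure_mono Set.subset_union_left)
    rw [measure_mono_null Set.inter_subset_right (gauss_null_singleton 0), add_zero]
  rw [hsplit, hBval, hA, hIci, two_mul]

lemma gauss_neg_abs_mem (s : Set ℝ) (hs : MeasurableSet s) :
    gaussianReal 0 1 {x | -|x| ∈ s} = 2 * gaussianReal 0 1 (s ∩ Iio 0) := by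
  set γ := gaussianReal 0 1
  have hsplit : γ {x | -|x| ∈ s} =
      γ ({x | -|x| ∈ s} ∩ Iio 0) + γ ({x | -|x| ∈ s} ∩ Ici 0) := by
    rw [← measure_inter_add_diff {x | -|x| ∈ s} measurableSet_Iio]
    congr 1
    simp [Set.diff_eq, Set.compl_Iio]
  have hA : {x : ℝ | -|x| ∈ s} ∩ Iio 0 = s ∩ Iio 0 := by
    ext x
    simp only [Set.mem_inter_iff, Set.mem_setOf_eq, Set.mem_Iio]
    constructor
    · rintro ⟨h1, h2⟩; rw [abs_of_neg h2, neg_neg] at h1; exact ⟨h1, h2⟩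
    · rintro ⟨h1, h2⟩; rw [abs_of_neg h2, neg_neg]; exact ⟨h1, h2⟩
  have hB : {x : ℝ | -|x| ∈ s} ∩ Ici 0 = (fun x : ℝ => -x) ⁻¹' (s ∩ Iic 0) := by
    ext x
    simp only [Set.mem_inter_iff, Set.mem_setOf_eq, Set.mem_Ici, Set.mem_preimage, Set.mem_Iic]
    constructor
    · rintro ⟨h1, h2⟩; rw [abs_of_nonneg h2] at h1; exact ⟨h1, by linarith⟩
    · rintro ⟨h1, h2⟩
      have hx : 0 ≤ x := by linarith
      rw [abs_of_nonneg hx]; exact ⟨h1, hx⟩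
  have hBval : γ ({x | -|x| ∈ s} ∩ Ici 0) = γ (s ∩ Iic 0) := by
    rw [hB, ← Measure.map_apply measurable_neg (hs.inter measurableSet_Iic), gauss_map_neg]
  have hIic : γ (s ∩ Iic 0) = γ (s ∩ Iio 0) := by
    have h0 : s ∩ Iic 0 = (s ∩ Iio 0) ∪ (s ∩ {0}) := by
      ext x
      simp only [Set.mem_inter_iff, Set.mem_Iic, Set.mem_Iio, Set.mem_union,
        Set.mem_singleton_iff]
      constructor
      · rintro ⟨h1, h2⟩
        rcases lt_or_eq_of_le h2 with h | h
        · exact Or.inl ⟨h1, h⟩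
        · exact Or.inr ⟨h1, h⟩
      · rintro (⟨h1, h2⟩ | ⟨h1, h2⟩)
        · exact ⟨h1, le_of_lt h2⟩
        · exact ⟨h1, le_of_eq h2⟩
    rw [h0]
    refine le_antisymm ((measure_union_le _ _).trans ?_) (measure_mono Set.subset_union_left)
    rw [measure_mono_null Set.inter_subset_right (gauss_null_singleton 0), add_zero]
  rw [hsplit, hBval, hA, hIic, two_mul]

lemma rad_mul_abs_gauss_map :
    Measure.map (fun p : ℝ × ℝ => p.1 * |p.2|) (radMeasure.prod (gaussianReal 0 1)) =
      gaussianReal 0 1 := by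
  set γ := gaussianReal 0 1
  have hmeas : Measurable (fun p : ℝ × ℝ => p.1 * |p.2|) :=
    measurable_fst.mul measurable_snd.abs
  ext s hs
  rw [Measure.map_apply hmeas hs, Measure.prod_apply (hmeas hs)]
  have hpre : ∀ e : ℝ, Prod.mk e ⁻¹' ((fun p : ℝ × ℝ => p.1 * |p.2|) ⁻¹' s)
      = {x : ℝ | e * |x| ∈ s} := fun e => rfl
  simp only [hpre]
  rw [radMeasure_lintegral (fun e => γ {x : ℝ | e * |x| ∈ s})]
  have h1 : {x : ℝ | (1 : ℝ) * |x| ∈ s} = {x : ℝ | |x| ∈ s} := by simp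
  have h2 : {x : ℝ | (-1 : ℝ) * |x| ∈ s} = {x : ℝ | -|x| ∈ s} := by simp
  rw [h1, h2, gauss_abs_mem s hs, gauss_neg_abs_mem s hs, ← mul_assoc, ← mul_assoc,
    ENNReal.inv_mul_cancel two_ne_zero ENNReal.ofNat_ne_top, one_mul, one_mul]
  have hsplit : γ s = γ (s ∩ Iio 0) + γ (s ∩ Ici 0) := by
    rw [← measure_inter_add_diff s measurableSet_Iio]
    congr 1
    simp [Set.diff_eq, Set.compl_Iio]
  have hIci : γ (s ∩ Ici 0) = γ (s ∩ Ioi 0) := by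
    have h0 : s ∩ Ici 0 = (s ∩ Ioi 0) ∪ (s ∩ {0}) := by
      ext x
      simp only [Set.mem_inter_iff, Set.mem_Ici, Set.mem_Ioi, Set.mem_union,
        Set.mem_singleton_iff]
      constructor
      · rintro ⟨hh1, hh2⟩
        rcases lt_or_eq_of_le hh2 with h | h
        · exact Or.inl ⟨hh1, h⟩
        · exact Or.inr ⟨hh1, h.symm⟩
      · rintro (⟨hh1, hh2⟩ | ⟨hh1, hh2⟩)
        · exact ⟨hh1, le_of_lt hh2⟩
        · exact ⟨hh1, le_of_eq hh2.symm⟩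
    rw [h0]
    refine le_antisymm ((measure_union_le _ _).trans ?_) (measure_mono Set.subset_union_left)
    rw [measure_mono_null Set.inter_subset_right (gauss_null_singleton 0), add_zero]
  rw [hsplit, hIci, add_comm]
lemma ioi_integral : ∫ y in Ioi (0:ℝ), Real.exp (-y^2/2) * y = 1 := by
  have hderiv : ∀ y ∈ Ici (0:ℝ),
      HasDerivAt (fun z : ℝ => -Real.exp (-z^2/2)) (Real.exp (-y^2/2) * y) y := by
    intro y _
    have h1 : HasDerivAt (fun z : ℝ => -z^2/2) (-y) y := by
      have h := ((hasDerivAt_pow 2 y).neg).div_const 2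
      exact h.congr_deriv (by norm_num; ring)
    have h2 := h1.exp
    have h3 := h2.neg
    exact h3.congr_deriv (by ring)
  have heq : (fun y : ℝ => Real.exp (-y^2/2) * y) = fun x : ℝ => x * Real.exp (-(1/2) * x^2) := by
    funext x
    rw [mul_comm]
    congr 1
    ring
  have hint : IntegrableOn (fun y : ℝ => Real.exp (-y^2/2) * y) (Ioi 0) := by
    rw [heq]
    exact (integrable_mul_exp_neg_mul_sq (by norm_num : (0:ℝ) < 1/2)).integrableOn
  have htend : Tendsto (fun y : ℝ => -Real.exp (-y^2/2)) atTop (𝓝 0) := by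
    rw [← neg_zero]
    apply Filter.Tendsto.neg
    apply Real.tendsto_exp_atBot.comp
    have h4 : Tendsto (fun y : ℝ => -y^2/2) atTop atBot := by
      apply Filter.Tendsto.atBot_div_const (by norm_num : (0:ℝ) < 2)
      exact tendsto_neg_atTop_atBot.comp (tendsto_pow_atTop two_ne_zero)
    exact h4
  rw [integral_Ioi_of_hasDerivAt_of_tendsto' hderiv hint htend]
  norm_num

lemma gauss_density : gaussianReal 0 1
    = volume.withDensity (fun x => ((Real.toNNReal (gaussianPDFReal 0 1 x)) : ℝ≥0∞)) :=
  gaussianReal_of_var_ne_zero 0 one_ne_zero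

lemma pdf_explicit : ∀ x : ℝ, gaussianPDFReal 0 1 x
    = (Real.sqrt (2*π))⁻¹ * Real.exp (-x^2/2) := by
  intro x
  simp [gaussianPDFReal]

lemma integral_gauss_eq (g : ℝ → ℝ) :
    ∫ x, g x ∂(gaussianReal 0 1) = ∫ x, gaussianPDFReal 0 1 x * g x := by
  rw [gauss_density,
    integral_withDensity_eq_integral_smul ((measurable_gaussianPDFReal 0 1).real_toNNReal) g]
  congr 1
  funext x
  rw [NNReal.smul_def, Real.coe_toNNReal _ (gaussianPDFReal_nonneg 0 1 x), smul_eq_mul]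

lemma integrable_abs_gauss : Integrable (fun x : ℝ => |x|) (gaussianReal 0 1) := by
  rw [gauss_density,
    integrable_withDensity_iff_integrable_smul ((measurable_gaussianPDFReal 0 1).real_toNNReal)]
  have h := ((integrable_mul_exp_neg_mul_sq (by norm_num : (0:ℝ) < 1/2)).abs).const_mul
    ((Real.sqrt (2*π))⁻¹)
  convert h using 1
  · rfl
  funext x
  rw [NNReal.smul_def, Real.coe_toNNReal _ (gaussianPDFReal_nonneg 0 1 x), smul_eq_mul,
    pdf_explicit x]
  have hexp : Real.exp (-x^2/2) = Real.exp (-(1/2)*x^2) := by ring_nf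
  rw [hexp, abs_mul, abs_of_nonneg (Real.exp_pos _).le]
  ring
lemma integral_abs_gauss : ∫ x, |x| ∂(gaussianReal 0 1) = Real.sqrt (2/π) := by
  rw [integral_gauss_eq]
  have heq : (fun x : ℝ => gaussianPDFReal 0 1 x * |x|)
      = fun x : ℝ => (Real.sqrt (2*π))⁻¹ * ((fun y : ℝ => Real.exp (-y^2/2) * y) |x|) := by
    funext x
    rw [pdf_explicit x, mul_assoc]
    congr 2
    rw [sq_abs]
  rw [heq, integral_const_mul,
    integral_comp_abs (f := fun y : ℝ => Real.exp (-y^2/2) * y), ioi_integral]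
  have h2π : (0:ℝ) < Real.sqrt (2*π) := Real.sqrt_pos.mpr (by positivity)
  have hs : Real.sqrt (2/π) = 2 / Real.sqrt (2*π) := by
    rw [← mul_div_mul_left 2 π (two_ne_zero), Real.sqrt_div (by norm_num : (0:ℝ) ≤ 2*2),
      Real.sqrt_mul_self (by norm_num : (0:ℝ) ≤ 2)]
  rw [hs]
  field_simp
lemma map_eval_pi {n : ℕ} (μ : Fin n → Measure ℝ) [∀ i, IsProbabilityMeasure (μ i)] (j : Fin n) :
    Measure.map (fun a : Fin n → ℝ => a j) (Measure.pi μ) = μ j := by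
  ext s hs
  rw [Measure.map_apply (measurable_pi_apply j) hs]
  classical
  have hpre : (fun a : Fin n → ℝ => a j) ⁻¹' s
      = Set.pi Set.univ (Function.update (fun _ : Fin n => (Set.univ : Set ℝ)) j s) := by
    ext x
    simp only [Set.mem_preimage, Set.mem_pi, Set.mem_univ, forall_true_left]
    constructor
    · intro h i
      rcases eq_or_ne i j with rfl | hij
      · simpa using h
      · simp [Function.update_of_ne hij]
    · intro h
      have := h j
      simpa using this
  rw [hpre, Measure.pi_pi]
  rw [Finset.prod_eq_single_of_mem j (Finset.mem_univ j)]
  · simp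
  · intro i _ hij
    simp [Function.update_of_ne hij]

lemma measurePreserving_eval {n : ℕ} (μ : Fin n → Measure ℝ) [∀ i, IsProbabilityMeasure (μ i)]
    (j : Fin n) :
    MeasurePreserving (fun a : Fin n → ℝ => a j) (Measure.pi μ) (μ j) :=
  ⟨measurable_pi_apply j, map_eval_pi μ j⟩

lemma map_joint {Ω : Type} [MeasurableSpace Ω] (μ : Measure Ω) [IsProbabilityMeasure μ]
    {n : ℕ} (X : Fin n → Ω → ℝ) (ν : Fin n → Measure ℝ) [∀ i, IsProbabilityMeasure (ν i)]
    (hX : ∀ i, Measurable (X i)) (hi : iIndepFun X μ)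
    (hm : ∀ i, Measure.map (X i) μ = ν i) :
    Measure.map (fun ω i => X i ω) μ = Measure.pi ν := by
  refine (Measure.pi_eq fun s hs => ?_).symm
  rw [Measure.map_apply (measurable_pi_lambda _ hX) (MeasurableSet.univ_pi hs)]
  have hpre : (fun ω i => X i ω) ⁻¹' Set.pi Set.univ s = ⋂ i ∈ Finset.univ, X i ⁻¹' s i := by
    ext ω
    simp [Set.mem_pi]
  rw [hpre, hi.measure_inter_preimage_eq_mul Finset.univ (fun i _ => hs i)]
  exact Finset.prod_congr rfl fun i _ => by rw [← hm i, Measure.map_apply (hX i) (hs i)]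

end Helpers

section Main
open Real Set

variable {m n : ℕ}

/-- The linear functionals given by the rows of `A`. -/
def gfun (A : Matrix (Fin m) (Fin n) ℝ) (t : Fin m) (x : Fin n → ℝ) : ℝ := ∑ j, A t j * x j

/-- The sup of the rows. -/
noncomputable def fsup (A : Matrix (Fin m) (Fin n) ℝ) (x : Fin n → ℝ) : ℝ := ⨆ t, gfun A t x

lemma gfun_measurable (A : Matrix (Fin m) (Fin n) ℝ) (t : Fin m) : Measurable (gfun A t) :=
  Finset.measurable_sum _ fun j _ => measurable_const.mul (measurable_pi_apply j)

lemma fsup_eq_sup' [Nonempty (Fin m)] (A : Matrix (Fin m) (Fin n) ℝ) :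
    fsup A = Finset.univ.sup' Finset.univ_nonempty (fun t => gfun A t) := by
  funext x
  rw [fsup, Finset.sup'_apply, Finset.sup'_univ_eq_ciSup]

lemma fsup_measurable [Nonempty (Fin m)] (A : Matrix (Fin m) (Fin n) ℝ) :
    Measurable (fsup A) := by
  rw [fsup_eq_sup']
  exact Finset.measurable_sup' _ fun t _ => gfun_measurable A t

lemma gfun_abs_le (A : Matrix (Fin m) (Fin n) ℝ) (t : Fin m) (x : Fin n → ℝ) :
    |gfun A t x| ≤ ∑ j, |A t j| * |x j| :=
  (Finset.abs_sum_le_sum_abs _ _).trans (le_of_eq (by simp [abs_mul]))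

lemma gfun_le_fsup [Nonempty (Fin m)] (A : Matrix (Fin m) (Fin n) ℝ) (t : Fin m)
    (x : Fin n → ℝ) : gfun A t x ≤ fsup A x := by
  rw [fsup, ← Finset.sup'_univ_eq_ciSup]
  exact Finset.le_sup' (f := fun t => gfun A t x) (Finset.mem_univ t)

lemma fsup_abs_le [Nonempty (Fin m)] (A : Matrix (Fin m) (Fin n) ℝ) (x : Fin n → ℝ) :
    |fsup A x| ≤ ∑ t, ∑ j, |A t j| * |x j| := by
  have hb : ∀ t, |gfun A t x| ≤ ∑ t, ∑ j, |A t j| * |x j| := by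
    intro t
    refine (gfun_abs_le A t x).trans ?_
    refine Finset.single_le_sum (f := fun t => ∑ j, |A t j| * |x j|) ?_ (Finset.mem_univ t)
    intro i _
    positivity
  rw [abs_le]
  constructor
  · obtain ⟨t0⟩ : Nonempty (Fin m) := inferInstance
    have h1 : -(∑ t, ∑ j, |A t j| * |x j|) ≤ gfun A t0 x := by
      have := hb t0
      rw [abs_le] at this
      exact this.1
    exact h1.trans (gfun_le_fsup A t0 x)
  · rw [fsup_eq_sup', Finset.sup'_apply]
    refine Finset.sup'_le _ _ fun t _ => ?_
    exact (le_abs_self _).trans (hb t)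

lemma mul_fsup_le [Nonempty (Fin m)] (A : Matrix (Fin m) (Fin n) ℝ) {c : ℝ} (hc : 0 ≤ c)
    (x : Fin n → ℝ) (y : ℝ) (h : ∀ t, c * gfun A t x ≤ y) : c * fsup A x ≤ y := by
  have hcomp := Finset.comp_sup'_eq_sup'_comp (α := ℝ) (γ := ℝ) Finset.univ_nonempty
    (f := fun t => gfun A t x) (fun z : ℝ => c * z) (fun a b => mul_max_of_nonneg a b hc)
  have heq2 : c * fsup A x
      = Finset.univ.sup' Finset.univ_nonempty ((fun z : ℝ => c * z) ∘ fun t => gfun A t x) := by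
    rw [fsup, ← Finset.sup'_univ_eq_ciSup]
    exact hcomp
  rw [heq2]
  exact Finset.sup'_le _ _ fun t _ => h t

lemma coord_abs_integrable (μ : Measure ℝ) [IsProbabilityMeasure μ]
    (habs : Integrable (fun x : ℝ => |x|) μ) (j : Fin n) :
    Integrable (fun a : Fin n → ℝ => |a j|) (Measure.pi fun _ : Fin n => μ) :=
  ((_root_.measurePreserving_eval (fun _ : Fin n => μ) j).integrable_comp
    measurable_abs.aestronglyMeasurable).mpr habs

lemma coord_integral (μ : Measure ℝ) [IsProbabilityMeasure μ] (j : Fin n)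
    (φ : ℝ → ℝ) (hφ : Measurable φ) :
    ∫ a, φ (a j) ∂(Measure.pi fun _ : Fin n => μ) = ∫ x, φ x ∂μ := by
  conv_rhs => rw [← map_eval_pi (fun _ : Fin n => μ) j]
  rw [integral_map (measurable_pi_apply j).aemeasurable hφ.aestronglyMeasurable]

lemma fsup_integrable [Nonempty (Fin m)] (A : Matrix (Fin m) (Fin n) ℝ)
    (μ : Measure ℝ) [IsProbabilityMeasure μ] (habs : Integrable (fun x : ℝ => |x|) μ) :
    Integrable (fsup A) (Measure.pi fun _ : Fin n => μ) := by
  have hM : Integrable (fun a : Fin n → ℝ => ∑ t, ∑ j, |A t j| * |a j|)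
      (Measure.pi fun _ : Fin n => μ) := by
    refine integrable_finset_sum _ fun t _ => integrable_finset_sum _ fun j _ => ?_
    exact (coord_abs_integrable μ habs j).const_mul _
  refine hM.mono' (fsup_measurable A).aestronglyMeasurable (ae_of_all _ fun x => ?_)
  have := fsup_abs_le A x
  rwa [Real.norm_eq_abs]

lemma key_ineq [Nonempty (Fin m)] (A : Matrix (Fin m) (Fin n) ℝ) :
    ∫ x, fsup A x ∂(Measure.pi fun _ : Fin n => radMeasure)
      ≤ Real.sqrt (π / 2) * ∫ x, fsup A x ∂(Measure.pi fun _ : Fin n => gaussianReal 0 1) := by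
  classical
  set c : ℝ := Real.sqrt (2 / π) with hc_def
  have hc : 0 < c := Real.sqrt_pos.mpr (by positivity)
  set Pρ : Measure (Fin n → ℝ) := Measure.pi fun _ : Fin n => radMeasure with hPρ
  set Pγ : Measure (Fin n → ℝ) := Measure.pi fun _ : Fin n => gaussianReal 0 1 with hPγ
  -- measure preserving maps
  have hone : MeasurePreserving (fun q : ℝ × ℝ => q.1 * |q.2|)
      (radMeasure.prod (gaussianReal 0 1)) (gaussianReal 0 1) :=
    ⟨measurable_fst.mul measurable_snd.abs, rad_mul_abs_gauss_map⟩
  have hΦ : MeasurePreserving (fun w : Fin n → ℝ × ℝ => fun j => (w j).1 * |(w j).2|)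
      (Measure.pi fun _ : Fin n => radMeasure.prod (gaussianReal 0 1)) Pγ :=
    MeasureTheory.measurePreserving_pi _ _ (fun _ => hone)
  have he := MeasureTheory.measurePreserving_arrowProdEquivProdArrow ℝ ℝ (Fin n)
      (fun _ => radMeasure) (fun _ => gaussianReal 0 1)
  have hesymm := he.symm (MeasurableEquiv.arrowProdEquivProdArrow ℝ ℝ (Fin n))
  have hΨ : MeasurePreserving
      (fun p : (Fin n → ℝ) × (Fin n → ℝ) => fun j => p.1 j * |p.2 j|) (Pρ.prod Pγ) Pγ := by
    have h2 := hΦ.comp hesymm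
    exact h2
  -- the function F on the product space
  set F : (Fin n → ℝ) × (Fin n → ℝ) → ℝ := fun p => fsup A (fun j => p.1 j * |p.2 j|) with hF
  have hfmeas := fsup_measurable A
  have hPγ_int : Integrable (fsup A) Pγ := fsup_integrable A _ integrable_abs_gauss
  have hPρ_int : Integrable (fsup A) Pρ := fsup_integrable A _ integrable_abs_rad
  have hF_int : Integrable F (Pρ.prod Pγ) :=
    (hΨ.integrable_comp hfmeas.aestronglyMeasurable).mpr hPγ_int
  have hFeq : ∫ p, F p ∂(Pρ.prod Pγ) = ∫ x, fsup A x ∂Pγ := by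
    conv_rhs => rw [← hΨ.map_eq]
    rw [integral_map hΨ.measurable.aemeasurable hfmeas.aestronglyMeasurable]
  -- inner bound
  have hinner : ∀ a : Fin n → ℝ, c * fsup A a ≤ ∫ b, F (a, b) ∂Pγ := by
    intro a
    have hym : Measurable fun b : Fin n → ℝ => (fun j => a j * |b j|) :=
      measurable_pi_lambda _ fun j => measurable_const.mul (measurable_pi_apply j).abs
    have hFb_meas : Measurable fun b : Fin n → ℝ => F (a, b) := hfmeas.comp hym
    have hFb_int : Integrable (fun b => F (a, b)) Pγ := by
      have hN : Integrable (fun b : Fin n → ℝ => ∑ t, ∑ j, |A t j| * |a j| * |b j|) Pγ := by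
        refine integrable_finset_sum _ fun t _ => integrable_finset_sum _ fun j _ => ?_
        exact (coord_abs_integrable _ integrable_abs_gauss j).const_mul _
      refine hN.mono' hFb_meas.aestronglyMeasurable (ae_of_all _ fun b => ?_)
      rw [Real.norm_eq_abs]
      refine (fsup_abs_le A _).trans (le_of_eq ?_)
      refine Finset.sum_congr rfl fun t _ => Finset.sum_congr rfl fun j _ => ?_
      rw [abs_mul, abs_abs, mul_assoc]
    have hterm_int : ∀ t, Integrable (fun b : Fin n → ℝ => ∑ j, A t j * a j * |b j|) Pγ := by
      intro t
      refine integrable_finset_sum _ fun j _ => ?_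
      exact (coord_abs_integrable _ integrable_abs_gauss j).const_mul _
    refine mul_fsup_le A hc.le a _ fun t => ?_
    have h1 : ∫ b, (∑ j, A t j * a j * |b j|) ∂Pγ = c * gfun A t a := by
      rw [integral_finset_sum _ fun j _ =>
        (coord_abs_integrable _ integrable_abs_gauss j).const_mul _]
      have h2 : ∀ j, ∫ b : Fin n → ℝ, A t j * a j * |b j| ∂Pγ = A t j * a j * c := by
        intro j
        rw [integral_const_mul, coord_integral _ j _ measurable_abs, integral_abs_gauss]
      rw [Finset.sum_congr rfl fun j _ => h2 j]
      rw [gfun, Finset.mul_sum]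
      exact Finset.sum_congr rfl fun j _ => by ring
    rw [← h1]
    refine integral_mono (hterm_int t) hFb_int fun b => ?_
    have h3 : ∑ j, A t j * a j * |b j| = gfun A t (fun j => a j * |b j|) := by
      rw [gfun]
      exact Finset.sum_congr rfl fun j _ => by ring
    rw [h3]
    exact gfun_le_fsup A t _
  -- outer integration
  have houter : ∫ a, c * fsup A a ∂Pρ ≤ ∫ a, (∫ b, F (a, b) ∂Pγ) ∂Pρ :=
    integral_mono (hPρ_int.const_mul c) hF_int.integral_prod_left hinner
  rw [integral_const_mul] at houter
  rw [← MeasureTheory.integral_prod F hF_int, hFeq] at houter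
  -- conclude
  have hcc : Real.sqrt (π / 2) * c = 1 := by
    rw [hc_def, ← Real.sqrt_mul (by positivity : (0:ℝ) ≤ π / 2)]
    rw [show π / 2 * (2 / π) = 1 by field_simp]
    exact Real.sqrt_one
  calc ∫ x, fsup A x ∂Pρ = Real.sqrt (π / 2) * c * ∫ x, fsup A x ∂Pρ := by rw [hcc, one_mul]
    _ = Real.sqrt (π / 2) * (c * ∫ x, fsup A x ∂Pρ) := by ring
    _ ≤ Real.sqrt (π / 2) * ∫ x, fsup A x ∂Pγ := by
        refine mul_le_mul_of_nonneg_left houter (Real.sqrt_nonneg _)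

end Main

/-- **Gaussian–Bernoulli comparison.** For any matrix `A ∈ ℝ^{m×n}`, a vector `G` of
i.i.d. standard Gaussians and a vector `B` of i.i.d. Rademacher variables,
`E[sup_t (AB)_t] ≤ √(π/2) · E[sup_t (AG)_t]`. -/
theorem bernoulli_le_gaussian_sup :
    ∀ (m n : ℕ) (A : Matrix (Fin m) (Fin n) ℝ)
      (Ω₁ : Type) [MeasurableSpace Ω₁] (μ₁ : Measure Ω₁) [IsProbabilityMeasure μ₁]
      (Ω₂ : Type) [MeasurableSpace Ω₂] (μ₂ : Measure Ω₂) [IsProbabilityMeasure μ₂]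
      (G : Fin n → Ω₁ → ℝ) (B : Fin n → Ω₂ → ℝ),
      (∀ i, Measurable (G i)) →
      iIndepFun G μ₁ →
      (∀ i, Measure.map (G i) μ₁ = gaussianReal 0 1) →
      (∀ i, Measurable (B i)) →
      iIndepFun B μ₂ →
      (∀ i, Measure.map (B i) μ₂ = radMeasure) →
      (∫ ω, (⨆ t : Fin m, ∑ j, A t j * B j ω) ∂μ₂)
        ≤ Real.sqrt (Real.pi / 2) * ∫ ω, (⨆ t : Fin m, ∑ j, A t j * G j ω) ∂μ₁ := by
  intro m n A Ω₁ _ μ₁ _ Ω₂ _ μ₂ _ G B hGmeas hGindep hGlaw hBmeas hBindep hBlaw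
  rcases Nat.eq_zero_or_pos m with hm | hm
  · subst hm
    simp [Real.iSup_of_isEmpty]
  haveI : Nonempty (Fin m) := ⟨⟨0, hm⟩⟩
  have hBjoint := map_joint μ₂ B (fun _ => radMeasure) hBmeas hBindep hBlaw
  have hGjoint := map_joint μ₁ G (fun _ => gaussianReal 0 1) hGmeas hGindep hGlaw
  have hfmeas := fsup_measurable A
  have hL : ∫ ω, (⨆ t : Fin m, ∑ j, A t j * B j ω) ∂μ₂
      = ∫ x, fsup A x ∂(Measure.pi fun _ : Fin n => radMeasure) := by
    rw [← hBjoint, integral_map (measurable_pi_lambda _ hBmeas).aemeasurable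
      hfmeas.aestronglyMeasurable]
    rfl
  have hR : ∫ ω, (⨆ t : Fin m, ∑ j, A t j * G j ω) ∂μ₁
      = ∫ x, fsup A x ∂(Measure.pi fun _ : Fin n => gaussianReal 0 1) := by
    rw [← hGjoint, integral_map (measurable_pi_lambda _ hGmeas).aemeasurable
      hfmeas.aestronglyMeasurable]
    rfl
  rw [hL, hR]
  exact key_ineq A
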